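/- Let δ ≥ 0 and let f, g : ℝ³ → ℝ be continuously differentiable functions such that ⟨x⟩^{δ+1} f, ⟨x⟩^{δ+1} |∇f|, ⟨x⟩^{δ+1} g, and ⟨x⟩^{δ+1} |∇g| all belong to L²(ℝ³). Then ⟨x⟩^{δ+2} f g ∈ L²(ℝ³). -/

import Mathlib

set_option maxHeartbeats 1000000


open MeasureTheory Real Filter
open scoped NNReal ENNReal

noncomputable section

/-- Euclidean 3-space `ℝ³`. -/
abbrev E3 := EuclideanSpace ℝ (Fin 3)

/-- Partial derivative in the `i`-th coordinate direction. -/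
def pd (i : Fin 3) (f : E3 → ℝ) : E3 → ℝ := fun x => fderiv ℝ f x (EuclideanSpace.single i 1)

/-- The partial derivative `∂^m` corresponding to the multi-index `m`. -/
def pdm (m : Fin 3 → ℕ) (f : E3 → ℝ) : E3 → ℝ :=
  (pd 0)^[m 0] <| (pd 1)^[m 1] <| (pd 2)^[m 2] f

/-- The order `|m|` of a multi-index `m`. -/
def mdeg (m : Fin 3 → ℕ) : ℕ := m 0 + m 1 + m 2

/-- The Laplacian on `ℝ³`. -/
def lap (f : E3 → ℝ) : E3 → ℝ := fun x => ∑ i, pd i (pd i f) x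

/-- The weight `⟨x⟩ = (1 + |x|²)^(1/2)`. -/
def jw (x : E3) : ℝ := Real.sqrt (1 + ‖x‖ ^ 2)

lemma memLp_six (u : E3 → ℝ) (hu : ContDiff ℝ 1 u) (h0 : MemLp u 2 volume)
    (h1 : MemLp (fun x => fderiv ℝ u x) 2 volume) : MemLp u 6 volume := by
  set φ : ContDiffBump (0 : E3) := ⟨1, 2, one_pos, one_lt_two⟩ with hφ
  obtain ⟨M, hM⟩ : ∃ M, ∀ y, ‖fderiv ℝ φ y‖ ≤ M := by
    obtain ⟨M, hM⟩ := (φ.hasCompactSupport.fderiv ℝ).exists_bound_of_continuous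
      ((φ.contDiff (n := ⊤)).continuous_fderiv (by simp))
    exact ⟨M, hM⟩
  have hM0 : 0 ≤ M := le_trans (norm_nonneg _) (hM 0)
  set c : ℕ → ℝ := fun n => ((n : ℝ) + 1)⁻¹ with hc
  have hc_pos : ∀ n, 0 < c n := fun n => by positivity
  have hc_le : ∀ n, c n ≤ 1 := fun n => by
    rw [hc]; simp only []
    rw [inv_le_one_iff₀]; right; linarith [Nat.cast_nonneg (α := ℝ) n]
  set v : ℕ → E3 → ℝ := fun n x => φ (c n • x) * u x with hv
  -- smoothness of the cut-offs
  have hψ : ∀ n, ContDiff ℝ 1 (fun x : E3 => φ (c n • x)) := fun n =>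
    (φ.contDiff (n := 1)).comp (contDiff_id.const_smul (c n))
  have hvc : ∀ n, ContDiff ℝ 1 (v n) := fun n => (hψ n).mul hu
  -- derivative of the cut-off and its bound
  have hψder : ∀ n x, HasFDerivAt (fun x : E3 => φ (c n • x))
      ((fderiv ℝ φ (c n • x)).comp (c n • ContinuousLinearMap.id ℝ E3)) x := by
    intro n x
    have h1' : HasFDerivAt (fun x : E3 => c n • x) (c n • ContinuousLinearMap.id ℝ E3) x :=
      (hasFDerivAt_id x).const_smul (c n)
    exact (((φ.contDiff (n := 1)).differentiable one_ne_zero (c n • x)).hasFDerivAt).comp x h1'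
  have hψbound : ∀ n x, ‖(fderiv ℝ φ (c n • x)).comp (c n • ContinuousLinearMap.id ℝ E3)‖ ≤ M := by
    intro n x
    calc ‖(fderiv ℝ φ (c n • x)).comp (c n • ContinuousLinearMap.id ℝ E3)‖
        ≤ ‖fderiv ℝ φ (c n • x)‖ * ‖c n • ContinuousLinearMap.id ℝ E3‖ :=
          ContinuousLinearMap.opNorm_comp_le _ _
      _ ≤ M * 1 := by
          apply mul_le_mul (hM _) ?_ (norm_nonneg _) hM0
          calc ‖c n • ContinuousLinearMap.id ℝ E3‖ ≤ ‖c n‖ * ‖ContinuousLinearMap.id ℝ E3‖ :=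
                ContinuousLinearMap.opNorm_smul_le _ _
            _ ≤ 1 * 1 := by
                apply mul_le_mul ?_ ContinuousLinearMap.norm_id_le (norm_nonneg _) zero_le_one
                rw [Real.norm_eq_abs, abs_of_pos (hc_pos n)]; exact hc_le n
            _ = 1 := one_mul 1
      _ = M := mul_one M
  -- derivative of v n
  have hvder : ∀ n x, HasFDerivAt (v n)
      (φ (c n • x) • fderiv ℝ u x +
        u x • ((fderiv ℝ φ (c n • x)).comp (c n • ContinuousLinearMap.id ℝ E3))) x := by
    intro n x
    exact (hψder n x).mul ((hu.differentiable one_ne_zero x).hasFDerivAt)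
  -- compact support
  have hcs : ∀ n, HasCompactSupport (v n) := by
    intro n
    apply HasCompactSupport.intro (isCompact_closedBall (0 : E3) (2 * ((n : ℝ) + 1)))
    intro x hx
    rw [Metric.mem_closedBall, dist_zero_right, not_le] at hx
    have : φ (c n • x) = 0 := by
      apply φ.zero_of_le_dist
      rw [dist_zero_right, norm_smul, Real.norm_eq_abs, abs_of_pos (hc_pos n)]
      show (2 : ℝ) ≤ _
      rw [hc]
      rw [inv_mul_eq_div, le_div_iff₀ (by positivity : (0:ℝ) < ((n:ℝ)+1))]
      linarith
    simp [hv, this]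
  -- majorant
  set w : E3 → ℝ := fun x => ‖fderiv ℝ u x‖ + M * ‖u x‖ with hw
  have hw2 : MemLp w 2 volume := h1.norm.add (h0.norm.const_mul M)
  have hvbound : ∀ n, eLpNorm (fderiv ℝ (v n)) 2 volume ≤ eLpNorm w 2 volume := by
    intro n
    apply eLpNorm_mono
    intro x
    rw [(hvder n x).fderiv]
    have h1' : ‖φ (c n • x) • fderiv ℝ u x‖ ≤ ‖fderiv ℝ u x‖ := by
      refine le_trans (ContinuousLinearMap.opNorm_smul_le _ _) ?_
      rw [Real.norm_eq_abs, abs_of_nonneg φ.nonneg]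
      calc φ (c n • x) * ‖fderiv ℝ u x‖ ≤ 1 * ‖fderiv ℝ u x‖ :=
            mul_le_mul_of_nonneg_right φ.le_one (norm_nonneg _)
        _ = ‖fderiv ℝ u x‖ := one_mul _
    have h2' : ‖u x • ((fderiv ℝ φ (c n • x)).comp (c n • ContinuousLinearMap.id ℝ E3))‖
        ≤ M * ‖u x‖ := by
      refine le_trans (ContinuousLinearMap.opNorm_smul_le _ _) ?_
      rw [mul_comm]
      exact mul_le_mul_of_nonneg_right (hψbound n x) (norm_nonneg _)
    calc ‖_‖ ≤ _ := norm_add_le _ _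
      _ ≤ ‖fderiv ℝ u x‖ + M * ‖u x‖ := add_le_add h1' h2'
      _ ≤ ‖w x‖ := le_abs_self _
  have hn3 : (0:ℕ) < Module.finrank ℝ E3 := by
    rw [finrank_euclideanSpace_fin]; norm_num
  have hp' : ((6:ℝ≥0) : ℝ)⁻¹ = ((2:ℝ≥0):ℝ)⁻¹ - (Module.finrank ℝ E3 : ℝ)⁻¹ := by
    rw [finrank_euclideanSpace_fin]; norm_num
  set C : ℝ≥0∞ := SNormLESNormFDerivOfEqConst ℝ (volume : Measure E3) 2 * eLpNorm w 2 volume with hC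
  have hsob : ∀ n, eLpNorm (v n) 6 volume ≤ C := by
    intro n
    have key := eLpNorm_le_eLpNorm_fderiv_of_eq (volume : Measure E3) (hvc n) (hcs n)
      (p := 2) (p' := 6) (by norm_num) hn3 hp'
    have e6 : ((6:ℝ≥0):ℝ≥0∞) = 6 := by norm_cast
    have e2 : ((2:ℝ≥0):ℝ≥0∞) = 2 := by norm_cast
    rw [e6, e2] at key
    exact key.trans (mul_le_mul_right (hvbound n) _)
  have hlim : ∀ x : E3, Tendsto (fun n => v n x) atTop (nhds (u x)) := by
    intro x
    apply tendsto_atTop_of_eventually_const (i₀ := ⌈‖x‖⌉₊)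
    intro n hn
    have hone : φ (c n • x) = 1 := by
      apply φ.one_of_mem_closedBall
      rw [Metric.mem_closedBall, dist_zero_right, norm_smul, Real.norm_eq_abs,
        abs_of_pos (hc_pos n)]
      show _ ≤ (1:ℝ)
      rw [hc, inv_mul_eq_div, div_le_one (by positivity)]
      calc ‖x‖ ≤ (⌈‖x‖⌉₊ : ℝ) := Nat.le_ceil _
        _ ≤ (n : ℝ) := Nat.cast_le.mpr hn
        _ ≤ (n : ℝ) + 1 := by linarith
    simp [hv, hone]
  have hfin := Lp.eLpNorm_lim_le_liminf_eLpNorm (p := 6) (μ := volume)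
    (fun n => (hvc n).continuous.aestronglyMeasurable) u (Eventually.of_forall hlim)
  refine ⟨hu.continuous.aestronglyMeasurable, lt_of_le_of_lt hfin ?_⟩
  refine lt_of_le_of_lt (liminf_le_of_frequently_le' (Frequently.of_forall hsob)) ?_
  exact ENNReal.mul_lt_top ENNReal.coe_lt_top hw2.2

lemma memLp_four (u : E3 → ℝ) (h2 : MemLp u 2 volume) (h6 : MemLp u 6 volume) :
    MemLp u 4 volume := by
  have hm : AEStronglyMeasurable u volume := h2.1
  have h2i : Integrable (fun x => ‖u x‖ ^ ((2:ℝ≥0∞).toReal)) volume :=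
    h2.integrable_norm_rpow (by norm_num) (by norm_num)
  have h6i : Integrable (fun x => ‖u x‖ ^ ((6:ℝ≥0∞).toReal)) volume :=
    h6.integrable_norm_rpow (by norm_num) (by norm_num)
  have ht2 : ((2:ℝ≥0∞).toReal) = (2:ℝ) := by norm_num
  have ht6 : ((6:ℝ≥0∞).toReal) = (6:ℝ) := by norm_num
  rw [ht2] at h2i; rw [ht6] at h6i
  have h4i : Integrable (fun x => ‖u x‖ ^ ((4:ℝ≥0∞).toReal)) volume := by
    have ht4 : ((4:ℝ≥0∞).toReal) = (4:ℝ) := by norm_num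
    rw [ht4]
    refine (h2i.add h6i).mono' ?_ ?_
    · exact (hm.norm.aemeasurable.pow_const (4:ℝ)).aestronglyMeasurable
    · refine Eventually.of_forall fun x => ?_
      have hn : (0:ℝ) ≤ ‖u x‖ := norm_nonneg _
      have key : ‖u x‖ ^ (4:ℝ) ≤ ‖u x‖ ^ (2:ℝ) + ‖u x‖ ^ (6:ℝ) := by
        rcases le_total (‖u x‖) 1 with h | h
        · have h4 : ‖u x‖ ^ (4:ℝ) ≤ ‖u x‖ ^ (2:ℝ) := by
            rcases eq_or_lt_of_le hn with h0 | h0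
            · rw [← h0, Real.zero_rpow (by norm_num), Real.zero_rpow (by norm_num)]
            · exact Real.rpow_le_rpow_of_exponent_ge h0 h (by norm_num)
          have h6n : (0:ℝ) ≤ ‖u x‖ ^ (6:ℝ) := Real.rpow_nonneg hn _
          linarith
        · have h4 : ‖u x‖ ^ (4:ℝ) ≤ ‖u x‖ ^ (6:ℝ) :=
            Real.rpow_le_rpow_of_exponent_le h (by norm_num)
          have h2n : (0:ℝ) ≤ ‖u x‖ ^ (2:ℝ) := Real.rpow_nonneg hn _
          linarith
      calc ‖‖u x‖ ^ (4:ℝ)‖ = ‖u x‖ ^ (4:ℝ) := by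
            rw [Real.norm_eq_abs, abs_of_nonneg (Real.rpow_nonneg hn _)]
        _ ≤ ‖u x‖ ^ (2:ℝ) + ‖u x‖ ^ (6:ℝ) := key
        _ = ((fun x => ‖u x‖ ^ (2:ℝ)) + fun x => ‖u x‖ ^ (6:ℝ)) x := by
            simp [Pi.add_apply]
  have := (memLp_norm_rpow_iff (p := 4) (q := 4) hm (by norm_num) (by norm_num)).mp ?_
  · exact this
  · rw [ENNReal.div_self (by norm_num) (by norm_num)]
    exact memLp_one_iff_integrable.mpr h4i

lemma one_le_jw (x : E3) : 1 ≤ jw x := by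
  rw [jw]
  have := Real.sqrt_le_sqrt (show (1:ℝ) ≤ 1 + ‖x‖^2 by nlinarith [sq_nonneg ‖x‖])
  rwa [Real.sqrt_one] at this

lemma jw_pos (x : E3) : 0 < jw x := lt_of_lt_of_le one_pos (one_le_jw x)

lemma jw_rpow (s : ℝ) (x : E3) : jw x ^ s = (1 + ‖x‖ ^ 2) ^ (s / 2) := by
  rw [jw, Real.sqrt_eq_rpow, ← Real.rpow_mul (by positivity)]
  congr 1
  ring

lemma hasFDerivAt_W (r : ℝ) (x : E3) :
    HasFDerivAt (fun y : E3 => (1 + ‖y‖ ^ 2) ^ r)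
      ((r * (1 + ‖x‖ ^ 2) ^ (r - 1)) • (2 • (innerSL ℝ x))) x := by
  have hq : HasFDerivAt (fun y : E3 => 1 + ‖y‖ ^ 2) (2 • (innerSL ℝ x)) x :=
    ((hasStrictFDerivAt_norm_sq x).hasFDerivAt).const_add 1
  exact hq.rpow_const (Or.inl (by positivity))

lemma norm_fderivW_le (r : ℝ) (hr : 0 ≤ r) (x : E3) :
    ‖(r * (1 + ‖x‖ ^ 2) ^ (r - 1)) • (2 • (innerSL ℝ x))‖ ≤ (2 * r) * (1 + ‖x‖ ^ 2) ^ r := by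
  have ha0 : (0:ℝ) < 1 + ‖x‖ ^ 2 := by positivity
  have ha1 : (1:ℝ) ≤ 1 + ‖x‖ ^ 2 := by nlinarith [norm_nonneg x]
  have h2T : ‖(2 • (innerSL ℝ x) : E3 →L[ℝ] ℝ)‖ ≤ 2 * ‖x‖ := by
    rw [two_smul]
    refine le_trans (norm_add_le _ _) ?_
    rw [innerSL_apply_norm]
    ring_nf
    exact le_refl _
  calc ‖(r * (1 + ‖x‖ ^ 2) ^ (r - 1)) • (2 • (innerSL ℝ x) : E3 →L[ℝ] ℝ)‖
      ≤ ‖r * (1 + ‖x‖ ^ 2) ^ (r - 1)‖ * ‖(2 • (innerSL ℝ x) : E3 →L[ℝ] ℝ)‖ :=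
        ContinuousLinearMap.opNorm_smul_le _ _
    _ ≤ (r * (1 + ‖x‖ ^ 2) ^ (r - 1)) * (2 * ‖x‖) := by
        apply mul_le_mul ?_ h2T (norm_nonneg _) (by positivity)
        rw [Real.norm_eq_abs, abs_of_nonneg (by positivity)]
    _ = (2 * r) * ((1 + ‖x‖ ^ 2) ^ (r - 1) * ‖x‖) := by ring
    _ ≤ (2 * r) * ((1 + ‖x‖ ^ 2) ^ (r - 1) * (1 + ‖x‖ ^ 2) ^ ((1:ℝ)/2)) := by
        apply mul_le_mul_of_nonneg_left ?_ (by positivity)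
        apply mul_le_mul_of_nonneg_left ?_ (by positivity)
        calc ‖x‖ = (‖x‖ ^ 2) ^ ((1:ℝ)/2) := by
              rw [← Real.sqrt_eq_rpow, Real.sqrt_sq (norm_nonneg x)]
          _ ≤ (1 + ‖x‖ ^ 2) ^ ((1:ℝ)/2) := by
              apply Real.rpow_le_rpow (by positivity) (by linarith) (by norm_num)
    _ = (2 * r) * (1 + ‖x‖ ^ 2) ^ (r - 1 + 1/2) := by rw [← Real.rpow_add ha0]
    _ ≤ (2 * r) * (1 + ‖x‖ ^ 2) ^ r := by
        apply mul_le_mul_of_nonneg_left ?_ (by positivity)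
        exact Real.rpow_le_rpow_of_exponent_le ha1 (by linarith)

lemma aux_L4 (δ : ℝ) (hδ : 0 ≤ δ) (f : E3 → ℝ) (hf : ContDiff ℝ 1 f)
    (hf0 : MemLp (fun x => jw x ^ (δ + 1) * f x) 2 volume)
    (hf1 : MemLp (fun x => jw x ^ (δ + 1) * ‖fderiv ℝ f x‖) 2 volume) :
    MemLp (fun x => jw x ^ (δ + 1) * f x) 4 volume := by
  have hr0 : (0:ℝ) < (δ + 1) / 2 := by linarith
  set W : E3 → ℝ := fun x => (1 + ‖x‖ ^ 2) ^ ((δ + 1) / 2) with hWdef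
  have hWeq : ∀ x : E3, jw x ^ (δ + 1) = W x := fun x => jw_rpow _ x
  have hfun : (fun x => jw x ^ (δ + 1) * f x) = fun x => W x * f x :=
    funext fun x => by rw [hWeq]
  have hfun1 : (fun x => jw x ^ (δ + 1) * ‖fderiv ℝ f x‖) = fun x => W x * ‖fderiv ℝ f x‖ :=
    funext fun x => by rw [hWeq]
  rw [hfun] at hf0 ⊢
  rw [hfun1] at hf1
  have hWpos : ∀ x, 0 < W x := fun x => Real.rpow_pos_of_pos (by positivity) _
  have hWc : ContDiff ℝ 1 W := by
    apply ContDiff.rpow_const_of_ne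
    · exact contDiff_const.add (contDiff_norm_sq ℝ)
    · intro x; positivity
  have hWf : ContDiff ℝ 1 (fun x => W x * f x) := hWc.mul hf
  have hD : ∀ x : E3, HasFDerivAt (fun y => W y * f y)
      (W x • fderiv ℝ f x + f x •
        (((δ + 1) / 2 * (1 + ‖x‖ ^ 2) ^ ((δ + 1) / 2 - 1)) • (2 • (innerSL ℝ x)))) x :=
    fun x => (hasFDerivAt_W ((δ + 1) / 2) x).mul ((hf.differentiable one_ne_zero x).hasFDerivAt)
  have hD2 : MemLp (fun x => fderiv ℝ (fun y => W y * f y) x) 2 volume := by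
    have hmaj : MemLp (fun x => W x * ‖fderiv ℝ f x‖ + (δ + 1) * ‖W x * f x‖) 2 volume :=
      hf1.add (hf0.norm.const_mul (δ + 1))
    refine MemLp.of_le hmaj ((hWf.continuous_fderiv one_ne_zero).aestronglyMeasurable) ?_
    refine Eventually.of_forall fun x => ?_
    rw [(hD x).fderiv]
    have hb1 : ‖W x • fderiv ℝ f x‖ ≤ W x * ‖fderiv ℝ f x‖ := by
      refine le_trans (ContinuousLinearMap.opNorm_smul_le _ _) ?_
      rw [Real.norm_eq_abs, abs_of_pos (hWpos x)]
    have hb2 : ‖f x • (((δ + 1) / 2 * (1 + ‖x‖ ^ 2) ^ ((δ + 1) / 2 - 1)) •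
        (2 • (innerSL ℝ x)))‖ ≤ (δ + 1) * ‖W x * f x‖ := by
      refine le_trans (ContinuousLinearMap.opNorm_smul_le _ _) ?_
      calc ‖f x‖ * ‖((δ + 1) / 2 * (1 + ‖x‖ ^ 2) ^ ((δ + 1) / 2 - 1)) • (2 • (innerSL ℝ x))‖
          ≤ ‖f x‖ * ((2 * ((δ + 1) / 2)) * (1 + ‖x‖ ^ 2) ^ ((δ + 1) / 2)) :=
            mul_le_mul_of_nonneg_left (norm_fderivW_le _ hr0.le x) (norm_nonneg _)
        _ = (δ + 1) * (W x * ‖f x‖) := by rw [hWdef]; ring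
        _ ≤ (δ + 1) * ‖W x * f x‖ := by
            apply mul_le_mul_of_nonneg_left ?_ (by linarith)
            rw [norm_mul, Real.norm_eq_abs (W x), abs_of_pos (hWpos x)]
    calc ‖W x • fderiv ℝ f x + f x • (((δ + 1) / 2 * (1 + ‖x‖ ^ 2) ^ ((δ + 1) / 2 - 1)) •
          (2 • (innerSL ℝ x)))‖
        ≤ _ := norm_add_le _ _
      _ ≤ W x * ‖fderiv ℝ f x‖ + (δ + 1) * ‖W x * f x‖ := add_le_add hb1 hb2
      _ ≤ ‖W x * ‖fderiv ℝ f x‖ + (δ + 1) * ‖W x * f x‖‖ := le_abs_self _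
  exact memLp_four _ hf0 (memLp_six _ hWf hf0 hD2)

/-- Product estimate: if f, g ∈ W^{1,2}_{δ+1} (with δ ≥ 0) are C¹, then
`⟨x⟩^{δ+2} f g ∈ L²(ℝ³)`. -/
theorem weighted_product_estimate (δ : ℝ) (hδ : 0 ≤ δ)
    (f g : E3 → ℝ) (hf : ContDiff ℝ 1 f) (hg : ContDiff ℝ 1 g)
    (hf0 : MemLp (fun x => jw x ^ (δ + 1) * f x) 2 volume)
    (hf1 : MemLp (fun x => jw x ^ (δ + 1) * ‖fderiv ℝ f x‖) 2 volume)
    (hg0 : MemLp (fun x => jw x ^ (δ + 1) * g x) 2 volume)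
    (hg1 : MemLp (fun x => jw x ^ (δ + 1) * ‖fderiv ℝ g x‖) 2 volume) :
    MemLp (fun x => jw x ^ (δ + 2) * (f x * g x)) 2 volume := by
  have hF4 := aux_L4 δ hδ f hf hf0 hf1
  have hG4 := aux_L4 δ hδ g hg hg0 hg1
  have harith : (1:ℝ≥0∞)/2 = 1/4 + 1/4 := by
    rw [ENNReal.div_add_div_same]
    rw [show (4:ℝ≥0∞) = 2 * 2 by norm_num, ENNReal.div_eq_div_iff] <;> norm_num
  have hFG : MemLp (fun x => (jw x ^ (δ + 1) * f x) * (jw x ^ (δ + 1) * g x)) 2 volume := by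
    haveI : ENNReal.HolderTriple 4 4 2 := ⟨by simpa [one_div] using harith.symm⟩
    have h := MemLp.smul (𝕜 := ℝ) (p := 4) (q := 4) (r := 2) hG4 hF4
    exact h
  have hjwc : Continuous jw := by
    have : Continuous fun x : E3 => 1 + ‖x‖ ^ 2 := by continuity
    exact Real.continuous_sqrt.comp this
  refine MemLp.of_le hFG ?_ (Eventually.of_forall fun x => ?_)
  · exact ((hjwc.rpow_const fun x => Or.inr (by linarith)).mul
      (hf.continuous.mul hg.continuous)).aestronglyMeasurable
  · have hp2 : 0 < jw x ^ (δ + 2) := Real.rpow_pos_of_pos (jw_pos x) _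
    have hp1 : 0 < jw x ^ (δ + 1) := Real.rpow_pos_of_pos (jw_pos x) _
    have h1 : jw x ^ (δ + 2) ≤ jw x ^ (δ + 1) * jw x ^ (δ + 1) := by
      rw [← Real.rpow_add (jw_pos x)]
      exact Real.rpow_le_rpow_of_exponent_le (one_le_jw x) (by linarith)
    calc ‖jw x ^ (δ + 2) * (f x * g x)‖ = jw x ^ (δ + 2) * (‖f x‖ * ‖g x‖) := by
          rw [norm_mul, norm_mul, Real.norm_eq_abs (jw x ^ (δ + 2)), abs_of_pos hp2]
      _ ≤ (jw x ^ (δ + 1) * jw x ^ (δ + 1)) * (‖f x‖ * ‖g x‖) :=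
          mul_le_mul_of_nonneg_right h1 (by positivity)
      _ = ‖(jw x ^ (δ + 1) * f x) * (jw x ^ (δ + 1) * g x)‖ := by
          rw [norm_mul, norm_mul, norm_mul, Real.norm_eq_abs (jw x ^ (δ + 1)),
            abs_of_pos hp1]
          ring
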